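/- The asymptotic PCA amplitude bias at the largest real root β of B satisfies the bound 1 + (β/(cθ²) − 1)·(β/θ² + 1) ≥ (1 + σ̄²/(cθ²))·(1 + σ̄²/θ²), with equality if and only if σ_1² = ⋯ = σ_L². (Homoscedastic noise minimizes the asymptotic positive bias of the PCA amplitudes for a fixed average noise variance.) -/

import Mathlib

open Finset Filter Set Topology

/-- the asymptotic PCA amplitude bias at `β` satisfies
`1 + (β/(cθ²) − 1)(β/θ² + 1) ≥ (1 + σ̄²/(cθ²))(1 + σ̄²/θ²)`, with equality iff the noise
is homoscedastic. -/
theorem amplitude_bias_bound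
    (c θ : ℝ) (hc : 0 < c) (hθ : 0 < θ)
    (L : ℕ) (hL : 1 ≤ L) (p σ : Fin L → ℝ)
    (hp : ∀ ℓ, 0 < p ℓ) (hpsum : ∑ ℓ, p ℓ = 1)
    (hσ : ∀ ℓ, 0 < σ ℓ)
    (σmax : ℝ) (hmaxle : ∀ ℓ, σ ℓ ≤ σmax) (hmaxmem : ∃ ℓ, σ ℓ = σmax)
    (B : ℝ → ℝ) (hB : ∀ x, B x = 1 - c * θ ^ 2 * ∑ ℓ, p ℓ / (x - σ ℓ))
    (β : ℝ) (hβmem : σmax < β) (hβroot : B β = 0) :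
    (1 + (∑ ℓ, p ℓ * σ ℓ) / (c * θ ^ 2)) * (1 + (∑ ℓ, p ℓ * σ ℓ) / θ ^ 2) ≤
      1 + (β / (c * θ ^ 2) - 1) * (β / θ ^ 2 + 1) ∧
    (1 + (β / (c * θ ^ 2) - 1) * (β / θ ^ 2 + 1) =
      (1 + (∑ ℓ, p ℓ * σ ℓ) / (c * θ ^ 2)) * (1 + (∑ ℓ, p ℓ * σ ℓ) / θ ^ 2) ↔ (∀ ℓ ℓ' : Fin L, σ ℓ = σ ℓ')) := by
  have hFin : Nonempty (Fin L) := ⟨⟨0, hL⟩⟩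
  set s : ℝ := ∑ ℓ, p ℓ * σ ℓ with hs
  have ht : (0:ℝ) < c * θ ^ 2 := by positivity
  have hu : (0:ℝ) < θ ^ 2 := by positivity
  have hspos : 0 < s := by
    apply Finset.sum_pos (fun ℓ _ => mul_pos (hp ℓ) (hσ ℓ))
    exact Finset.univ_nonempty
  have hsle : s ≤ σmax := by
    calc s = ∑ ℓ, p ℓ * σ ℓ := rfl
      _ ≤ ∑ ℓ, p ℓ * σmax :=
        Finset.sum_le_sum fun ℓ _ => mul_le_mul_of_nonneg_left (hmaxle ℓ) (hp ℓ).le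
      _ = σmax := by rw [← Finset.sum_mul, hpsum, one_mul]
  have hβσ : ∀ ℓ, 0 < β - σ ℓ := fun ℓ => sub_pos.2 (lt_of_le_of_lt (hmaxle ℓ) hβmem)
  have hβs : 0 < β - s := sub_pos.2 (lt_of_le_of_lt hsle hβmem)
  have hβpos : 0 < β := lt_trans (lt_of_lt_of_le (hσ ⟨0, hL⟩) (hmaxle ⟨0, hL⟩)) hβmem
  -- the root equation
  have hS : ∑ ℓ, p ℓ / (β - σ ℓ) = 1 / (c * θ ^ 2) := by
    have h1 := hβroot
    rw [hB β] at h1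
    field_simp
    linarith
  -- the variance identity
  have h2 : ∑ ℓ, p ℓ * (σ ℓ - s) = 0 := by
    have : ∑ ℓ, p ℓ * (σ ℓ - s) = (∑ ℓ, p ℓ * σ ℓ) - s * ∑ ℓ, p ℓ := by
      rw [Finset.mul_sum, ← Finset.sum_sub_distrib]
      exact Finset.sum_congr rfl fun ℓ _ => by ring
    rw [this, hpsum, mul_one, ← hs, sub_self]
  have key : ∑ ℓ, p ℓ * (σ ℓ - s) ^ 2 / ((β - σ ℓ) * (β - s)) =
      (β - s) * (∑ ℓ, p ℓ / (β - σ ℓ)) - 1 := by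
    have h1 : ∀ ℓ, p ℓ * (σ ℓ - s) ^ 2 / ((β - σ ℓ) * (β - s)) =
        (β - s) * (p ℓ / (β - σ ℓ)) - p ℓ - (p ℓ * (σ ℓ - s)) / (β - s) := by
      intro ℓ
      have h3 := (hβσ ℓ).ne'
      have h4 := hβs.ne'
      field_simp
      ring
    calc ∑ ℓ, p ℓ * (σ ℓ - s) ^ 2 / ((β - σ ℓ) * (β - s))
        = ∑ ℓ, ((β - s) * (p ℓ / (β - σ ℓ)) - p ℓ - (p ℓ * (σ ℓ - s)) / (β - s)) :=
          Finset.sum_congr rfl fun ℓ _ => h1 ℓ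
      _ = (β - s) * (∑ ℓ, p ℓ / (β - σ ℓ)) - (∑ ℓ, p ℓ)
            - (∑ ℓ, p ℓ * (σ ℓ - s)) / (β - s) := by
          rw [Finset.sum_sub_distrib, Finset.sum_sub_distrib, ← Finset.mul_sum,
            ← Finset.sum_div]
      _ = (β - s) * (∑ ℓ, p ℓ / (β - σ ℓ)) - 1 := by rw [hpsum, h2]; ring
  have hTnonneg : 0 ≤ ∑ ℓ, p ℓ * (σ ℓ - s) ^ 2 / ((β - σ ℓ) * (β - s)) :=
    Finset.sum_nonneg fun ℓ _ =>
      div_nonneg (mul_nonneg (hp ℓ).le (sq_nonneg _)) (mul_pos (hβσ ℓ) hβs).le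
  have hkey2 : 0 ≤ (β - s) * (1 / (c * θ ^ 2)) - 1 := by
    rw [← hS, ← key]; exact hTnonneg
  have hβge : s + c * θ ^ 2 ≤ β := by
    have h5 : 1 ≤ (β - s) / (c * θ ^ 2) := by
      rw [div_eq_mul_one_div]; linarith
    rw [le_div_iff₀ ht, one_mul] at h5
    linarith
  have hne1 : (c * θ ^ 2) ≠ 0 := ht.ne'
  have hne2 : (θ ^ 2 : ℝ) ≠ 0 := hu.ne'
  constructor
  · rw [← sub_nonneg]
    have hid : (1 + (β / (c * θ ^ 2) - 1) * (β / θ ^ 2 + 1)) -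
        (1 + s / (c * θ ^ 2)) * (1 + s / θ ^ 2) =
        (β - s - c * θ ^ 2) * (β + s + θ ^ 2) / (c * θ ^ 2 * θ ^ 2) := by
      field_simp
      ring
    rw [hid]
    apply div_nonneg _ (by positivity)
    apply mul_nonneg (by linarith) (by linarith)
  · constructor
    · intro heq
      have h0 : (β - s - c * θ ^ 2) * (β + s + θ ^ 2) = 0 := by
        have hid : (β - s - c * θ ^ 2) * (β + s + θ ^ 2) =
            ((1 + (β / (c * θ ^ 2) - 1) * (β / θ ^ 2 + 1)) -
            (1 + s / (c * θ ^ 2)) * (1 + s / θ ^ 2)) * (c * θ ^ 2 * θ ^ 2) := by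
          field_simp
          ring
        rw [hid, heq]; ring
      have hβeq : β = s + c * θ ^ 2 := by
        rcases mul_eq_zero.1 h0 with h | h
        · linarith
        · nlinarith
      have hT0 : ∑ ℓ, p ℓ * (σ ℓ - s) ^ 2 / ((β - σ ℓ) * (β - s)) = 0 := by
        rw [key, hS, hβeq]
        field_simp
        ring
      have hterm := (Finset.sum_eq_zero_iff_of_nonneg
        (fun ℓ _ => div_nonneg (mul_nonneg (hp ℓ).le (sq_nonneg _)) (mul_pos (hβσ ℓ) hβs).le : ∀ ℓ ∈ Finset.univ,
          (0:ℝ) ≤ p ℓ * (σ ℓ - s) ^ 2 / ((β - σ ℓ) * (β - s)))).1 hT0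
      have hall : ∀ ℓ, σ ℓ = s := by
        intro ℓ
        have h6 := hterm ℓ (Finset.mem_univ ℓ)
        have h7 : (σ ℓ - s) ^ 2 = 0 := by
          by_contra h8
          have h9 : 0 < (σ ℓ - s) ^ 2 := lt_of_le_of_ne (sq_nonneg _) (Ne.symm h8)
          have : 0 < p ℓ * (σ ℓ - s) ^ 2 / ((β - σ ℓ) * (β - s)) := by
            apply div_pos (mul_pos (hp ℓ) h9) (mul_pos (hβσ ℓ) hβs)
          linarith
        have := pow_eq_zero_iff (n := 2) (by norm_num) |>.1 h7
        linarith [this]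
      intro ℓ ℓ'
      rw [hall ℓ, hall ℓ']
    · intro hconst
      have hseq : s = σ ⟨0, hL⟩ := by
        calc s = ∑ ℓ, p ℓ * σ ⟨0, hL⟩ :=
            Finset.sum_congr rfl fun ℓ _ => by rw [hconst ℓ ⟨0, hL⟩]
          _ = σ ⟨0, hL⟩ := by rw [← Finset.sum_mul, hpsum, one_mul]
      have hSs : ∑ ℓ, p ℓ / (β - σ ℓ) = 1 / (β - s) := by
        calc ∑ ℓ, p ℓ / (β - σ ℓ) = ∑ ℓ, p ℓ / (β - s) :=
            Finset.sum_congr rfl fun ℓ _ => by rw [hconst ℓ ⟨0, hL⟩, ← hseq]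
          _ = (∑ ℓ, p ℓ) / (β - s) := by rw [Finset.sum_div]
          _ = 1 / (β - s) := by rw [hpsum]
      have hβeq : β = s + c * θ ^ 2 := by
        have h10 : (1:ℝ) / (β - s) = 1 / (c * θ ^ 2) := by rw [← hSs, hS]
        have h11 : β - s = c * θ ^ 2 := by
          field_simp at h10
          linarith
        linarith
      rw [hβeq]
      field_simp
      ring
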